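/- arXiv:1803.09591 — 3 statements merged into one kernel-verified Lean document; each statement's English description precedes it below -/
import Mathlib

section
/- Let R₀ < 0, n ≥ 1, and let R : [0,T) → ℝ be differentiable with R(0) ≥ R₀ and R'(t) ≥ (2/n) R(t)² whenever R(t) < 0. Then R(t) ≥ (1/R₀ − 2t/n)⁻¹ for all t ∈ [0,T). -/
open Set

theorem scalar_curvature_lower_bound_ode (R₀ : ℝ) (hR₀ : R₀ < 0) (n : ℕ) (hn : 1 ≤ n)
    (T : ℝ) (R R' : ℝ → ℝ) (hR0 : R 0 ≥ R₀)
    (hderiv : ∀ t ∈ Set.Ico 0 T, HasDerivAt R (R' t) t)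
    (hineq : ∀ t ∈ Set.Ico 0 T, R t < 0 → R' t ≥ (2 / (n : ℝ)) * (R t) ^ 2) :
    ∀ t ∈ Set.Ico 0 T, R t ≥ (1 / R₀ - 2 * t / (n : ℝ))⁻¹ := by
  intro t ht
  obtain ⟨ht0, htT⟩ := ht
  have hn' : (0 : ℝ) < n := by exact_mod_cast hn
  have hden : ∀ x : ℝ, 0 ≤ x → 1 / R₀ - 2 * x / (n : ℝ) < 0 := by
    intro x hx
    have h1 : 1 / R₀ < 0 := by
      apply div_neg_of_pos_of_neg one_pos hR₀
    have h2 : 0 ≤ 2 * x / (n : ℝ) := by positivity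
    linarith
  have hsub : Icc (0 : ℝ) t ⊆ Ico 0 T := fun x hx => ⟨hx.1, lt_of_le_of_lt hx.2 htT⟩
  have hRcont : ContinuousOn R (Icc 0 t) := fun x hx =>
    ((hderiv x (hsub hx)).continuousAt).continuousWithinAt
  have hφderiv : ∀ x : ℝ, 0 ≤ x →
      HasDerivAt (fun y : ℝ => (1 / R₀ - 2 * y / (n : ℝ))⁻¹)
        (2 / (n : ℝ) * ((1 / R₀ - 2 * x / (n : ℝ))⁻¹) ^ 2) x := by
    intro x hx
    have hd : HasDerivAt (fun y : ℝ => 1 / R₀ - 2 * y / (n : ℝ)) (-(2 / (n : ℝ))) x := by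
      have := (((hasDerivAt_id x).const_mul (2 : ℝ)).div_const (n : ℝ)).const_sub (1 / R₀)
      simpa [mul_comm] using this
    have hne : (1 / R₀ - 2 * x / (n : ℝ)) ≠ 0 := ne_of_lt (hden x hx)
    have : HasDerivAt (fun y : ℝ => (1 / R₀ - 2 * y / (n : ℝ))⁻¹) _ x := hd.inv hne
    convert this using 1
    rw [inv_pow, neg_neg, ← div_eq_mul_inv]
  have key : ∀ ε > (0 : ℝ), (1 / R₀ - 2 * t / (n : ℝ))⁻¹ - ε ≤ R t := by
    intro ε hε
    have main := image_le_of_deriv_right_lt_deriv_boundary'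
      (f := fun y : ℝ => (1 / R₀ - 2 * y / (n : ℝ))⁻¹ - ε)
      (f' := fun y : ℝ => 2 / (n : ℝ) * ((1 / R₀ - 2 * y / (n : ℝ))⁻¹) ^ 2)
      (a := 0) (b := t) (B := R) (B' := R')
      (fun x hx => (((hφderiv x hx.1).sub_const ε).continuousAt).continuousWithinAt)
      (fun x hx => ((hφderiv x hx.1).sub_const ε).hasDerivWithinAt)
      (by
        have : ((1 : ℝ) / R₀ - 2 * 0 / (n : ℝ))⁻¹ = R₀ := by
          simp [one_div]
        show (1 / R₀ - 2 * (0:ℝ) / (n : ℝ))⁻¹ - ε ≤ R 0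
        rw [this]; linarith)
      hRcont
      (fun x hx => (hderiv x (hsub ⟨hx.1, le_of_lt hx.2⟩)).hasDerivWithinAt)
      (by
        intro x hx heq
        have hφneg : (1 / R₀ - 2 * x / (n : ℝ))⁻¹ < 0 :=
          inv_lt_zero.mpr (hden x hx.1)
        have hRneg : R x < 0 := by rw [← heq]; linarith
        have h1 := hineq x (hsub ⟨hx.1, le_of_lt hx.2⟩) hRneg
        have hk : (0 : ℝ) < 2 / (n : ℝ) := by positivity
        have hsq : ((1 / R₀ - 2 * x / (n : ℝ))⁻¹) ^ 2 < (R x) ^ 2 := by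
          nlinarith [hφneg, hε, heq.symm]
        have := mul_lt_mul_of_pos_left hsq hk
        linarith)
    exact main ⟨ht0, le_refl t⟩
  have : (1 / R₀ - 2 * t / (n : ℝ))⁻¹ ≤ R t :=
    le_of_forall_pos_le_add fun ε hε => by linarith [key ε hε]
  linarith
end

section
/- Let τ, f : [s,t] → ℝ with τ(σ) = t − σ, and suppose f is differentiable on [s,t) with −∂_σ f(σ) ≤ (1/2) R(σ) − (1/(2τ(σ))) f(σ) for an integrable function R, and √(t−σ)·f(σ) → 0 as σ → t. Then √(t−s) f(s) ≤ (1/2) ∫ₛᵗ √(t−σ) R(σ) dσ. -/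
open Set MeasureTheory intervalIntegral

theorem sqrt_weighted_ode_lemma (s t : ℝ) (hst : s < t) (f f' R : ℝ → ℝ)
    (hderiv : ∀ σ ∈ Set.Ico s t, HasDerivAt f (f' σ) σ)
    (hineq : ∀ σ ∈ Set.Ico s t,
      -f' σ ≤ (1 / 2) * R σ - (1 / (2 * (t - σ))) * f σ)
    (hRint : IntervalIntegrable R MeasureTheory.volume s t)
    (hlim : Filter.Tendsto (fun σ => Real.sqrt (t - σ) * f σ)
      (nhdsWithin t (Set.Iio t)) (nhds 0)) :
    Real.sqrt (t - s) * f s ≤ (1 / 2) * ∫ σ in s..t, Real.sqrt (t - σ) * R σ := by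
  set g : ℝ → ℝ := fun σ => Real.sqrt (t - σ) * f σ with hg
  set w : ℝ → ℝ := fun σ => (1 / 2) * (Real.sqrt (t - σ) * R σ) with hw
  -- w is interval integrable
  have hwint : IntervalIntegrable w MeasureTheory.volume s t := by
    have hc : ContinuousOn (fun σ => (1 / 2) * Real.sqrt (t - σ)) (Set.uIcc s t) :=
      (continuous_const.mul ((continuous_const.sub continuous_id').sqrt)).continuousOn
    have := hRint.continuousOn_mul hc
    simpa [hw, mul_assoc] using this
  -- derivative of g on [s, t)
  have hgderiv : ∀ σ ∈ Set.Ico s t,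
      HasDerivAt g (-(1 / (2 * Real.sqrt (t - σ))) * f σ + Real.sqrt (t - σ) * f' σ) σ := by
    intro σ hσ
    have hpos : 0 < t - σ := sub_pos.mpr hσ.2
    have h1 : HasDerivAt (fun u : ℝ => t - u) (-1) σ := by
      simpa using (hasDerivAt_id σ).const_sub t
    have h2 : HasDerivAt (fun u => Real.sqrt (t - u))
        ((1 / (2 * Real.sqrt (t - σ))) * (-1)) σ :=
      (Real.hasDerivAt_sqrt hpos.ne').comp σ h1
    have h3 : HasDerivAt (fun u => Real.sqrt (t - u) * f u)
        ((1 / (2 * Real.sqrt (t - σ))) * (-1) * f σ + Real.sqrt (t - σ) * f' σ) σ :=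
      h2.mul (hderiv σ hσ)
    have : g = fun u => Real.sqrt (t - u) * f u := rfl
    rw [this]
    convert h3 using 1
    ring
  -- key pointwise bound: -(g)' ≤ w on [s,t)
  have hkey : ∀ σ ∈ Set.Ico s t,
      -(-(1 / (2 * Real.sqrt (t - σ))) * f σ + Real.sqrt (t - σ) * f' σ) ≤ w σ := by
    intro σ hσ
    have hpos : 0 < t - σ := sub_pos.mpr hσ.2
    have hsq : 0 < Real.sqrt (t - σ) := Real.sqrt_pos.mpr hpos
    have h := hineq σ hσ
    have hmul := mul_le_mul_of_nonneg_left h hsq.le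
    have hkey2 : Real.sqrt (t - σ) * (1 / (2 * (t - σ)) * f σ)
        = (1 / (2 * Real.sqrt (t - σ))) * f σ := by
      have : Real.sqrt (t - σ) * Real.sqrt (t - σ) = t - σ :=
        Real.mul_self_sqrt hpos.le
      field_simp
      linear_combination f σ * this
    calc -(-(1 / (2 * Real.sqrt (t - σ))) * f σ + Real.sqrt (t - σ) * f' σ)
        = Real.sqrt (t - σ) * (-f' σ) + (1 / (2 * Real.sqrt (t - σ))) * f σ := by ring
      _ ≤ Real.sqrt (t - σ) * ((1 / 2) * R σ - 1 / (2 * (t - σ)) * f σ)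
            + (1 / (2 * Real.sqrt (t - σ))) * f σ := by linarith [hmul]
      _ = w σ := by rw [mul_sub, hkey2]; ring
  -- main inequality: g s ≤ g σ + ∫ s..σ w for σ ∈ [s, t)
  have hmain : ∀ σ ∈ Set.Ico s t, g s ≤ g σ + ∫ u in s..σ, w u := by
    intro σ hσ
    have hσt : σ < t := hσ.2
    have hcont : ContinuousOn (fun u => -g u) (Set.Icc s σ) := by
      intro x hx
      have hx' : x ∈ Set.Ico s t := ⟨hx.1, lt_of_le_of_lt hx.2 hσt⟩
      exact ((hgderiv x hx').continuousAt.neg).continuousWithinAt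
    have hd : ∀ x ∈ Set.Ioo s σ, HasDerivWithinAt (fun u => -g u)
        (-(-(1 / (2 * Real.sqrt (t - x))) * f x + Real.sqrt (t - x) * f' x)) (Set.Ioi x) x := by
      intro x hx
      have hx' : x ∈ Set.Ico s t := ⟨hx.1.le, lt_of_lt_of_le hx.2 hσt.le⟩
      exact ((hgderiv x hx').neg).hasDerivWithinAt
    have hφint : IntegrableOn w (Set.Icc s σ) MeasureTheory.volume := by
      have := (hwint.mono_set (by
        rw [Set.uIcc_of_le hσ.1, Set.uIcc_of_le hst.le]
        exact Set.Icc_subset_Icc le_rfl hσt.le)).1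
      rwa [integrableOn_Icc_iff_integrableOn_Ioc]
    have := sub_le_integral_of_hasDeriv_right_of_le hσ.1 hcont hd hφint
      (fun x hx => hkey x ⟨hx.1.le, lt_of_lt_of_le hx.2 hσt.le⟩)
    linarith [this]
  -- take the limit σ → t⁻
  have hFlim : Filter.Tendsto (fun σ => g σ + ∫ u in s..σ, w u)
      (nhdsWithin t (Set.Iio t)) (nhds (0 + ∫ u in s..t, w u)) := by
    apply Filter.Tendsto.add hlim
    have hc : ContinuousOn (fun σ => ∫ u in s..σ, w u) (Set.uIcc s t) :=
      continuousOn_primitive_interval' hwint (Set.left_mem_uIcc)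
    have h1 : Filter.Tendsto (fun σ => ∫ u in s..σ, w u)
        (nhdsWithin t (Set.uIcc s t)) (nhds (∫ u in s..t, w u)) :=
      hc t (by rw [Set.uIcc_of_le hst.le]; exact Set.right_mem_Icc.mpr hst.le)
    refine h1.mono_left ?_
    rw [← nhdsWithin_Ioo_eq_nhdsLT hst]
    apply nhdsWithin_mono
    rw [Set.uIcc_of_le hst.le]
    exact Set.Ioo_subset_Icc_self
  have hne : (nhdsWithin t (Set.Iio t)).NeBot := nhdsLT_neBot t
  have hle : g s ≤ 0 + ∫ u in s..t, w u := by
    refine ge_of_tendsto hFlim ?_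
    filter_upwards [Ioo_mem_nhdsLT_of_mem (by constructor <;> simp [hst, le_refl] : t ∈ Set.Ioc s t)]
      with σ hσ
    exact hmain σ ⟨hσ.1.le, hσ.2⟩
  have : (∫ u in s..t, w u) = (1 / 2) * ∫ σ in s..t, Real.sqrt (t - σ) * R σ := by
    simp [hw, intervalIntegral.integral_const_mul]
  rw [this] at hle
  simpa using hle
end

section
/- Let μ₀ ∈ ℝ, n ≥ 1, T > 0, and V : [0,T) → (0,∞) differentiable. Suppose for all t ∈ [0,T): μ₀ ≤ −(T−t)(d/dt ln V(t)) + ln V(t) − (n/2) ln(4π(T−t)) − n, and (T−t) ln V(t) → 0 as t → T. Then V(t) ≥ (4π)^{n/2} e^{μ₀ + n/2} (T−t)^{n/2} for all t ∈ [0,T). -/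
open Real

theorem volume_lower_from_mu_entropy (μ₀ : ℝ) (n : ℕ) (hn : 1 ≤ n) (T : ℝ) (hT : 0 < T)
    (V V' : ℝ → ℝ) (hVpos : ∀ t ∈ Set.Ico 0 T, 0 < V t)
    (hderiv : ∀ t ∈ Set.Ico 0 T, HasDerivAt V (V' t) t)
    (hineq : ∀ t ∈ Set.Ico 0 T,
      μ₀ ≤ -(T - t) * (V' t / V t) + Real.log (V t)
            - ((n : ℝ) / 2) * Real.log (4 * π * (T - t)) - (n : ℝ))
    (hlim : Filter.Tendsto (fun t => (T - t) * Real.log (V t))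
      (nhdsWithin T (Set.Iio T)) (nhds 0)) :
    ∀ t ∈ Set.Ico 0 T,
      V t ≥ (4 * π) ^ ((n : ℝ) / 2) * Real.exp (μ₀ + (n : ℝ) / 2) * (T - t) ^ ((n : ℝ) / 2) := by
  have hπ : (0:ℝ) < 4 * π := by positivity
  set c : ℝ := (n : ℝ) / 2 with hc
  -- the comparison function
  set G : ℝ → ℝ := fun s =>
    (T - s) * Real.log (V s) + (μ₀ + n) * s - c * ((T - s) * Real.log (4 * π * (T - s)))
      + c * (T - s) with hG
  -- derivative of G on [0, T)
  have hGderiv : ∀ s ∈ Set.Ico 0 T, HasDerivAt G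
      (-Real.log (V s) + (T - s) * (V' s / V s) + (μ₀ + n)
        + c * Real.log (4 * π * (T - s))) s := by
    intro s hs
    have hVs := hVpos s hs
    have hTs : 0 < T - s := by linarith [hs.2]
    have h1 : HasDerivAt (fun x : ℝ => T - x) (-1) s := by
      simpa using (hasDerivAt_id s).const_sub T
    have h2 : HasDerivAt (fun x => Real.log (V x)) (V' s / V s) s :=
      (hderiv s hs).log hVs.ne'
    have h3 : HasDerivAt (fun x => (T - x) * Real.log (V x))
        (-Real.log (V s) + (T - s) * (V' s / V s)) s := by
      have := h1.mul h2
      exact this.congr_deriv (by ring)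
    have h4 : HasDerivAt (fun x => Real.log (4 * π * (T - x))) (-(1 / (T - s))) s := by
      have hin : HasDerivAt (fun x : ℝ => 4 * π * (T - x)) (4 * π * (-1)) s :=
        h1.const_mul (4 * π)
      have := hin.log (by positivity : 4 * π * (T - s) ≠ 0)
      convert this using 1
      field_simp
    have h5 : HasDerivAt (fun x => (T - x) * Real.log (4 * π * (T - x)))
        (-Real.log (4 * π * (T - s)) - 1) s := by
      have := h1.mul h4
      refine this.congr_deriv ?_
      field_simp
      ring
    have h6 : HasDerivAt (fun x => (μ₀ + n) * x) (μ₀ + n) s := by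
      simpa using (hasDerivAt_id s).const_mul (μ₀ + (n:ℝ))
    have := ((h3.add h6).sub ((h5.const_mul c))).add (h1.const_mul c)
    refine this.congr_deriv ?_
    ring
  have hc0 : (0:ℝ) ≤ c := by positivity
  -- derivative is nonpositive
  have hGderiv_le : ∀ s ∈ Set.Ico 0 T,
      -Real.log (V s) + (T - s) * (V' s / V s) + (μ₀ + n)
        + c * Real.log (4 * π * (T - s)) ≤ 0 := by
    intro s hs
    linarith [hineq s hs]
  -- G is antitone on [t, T) for each t
  intro t ht
  have htT : t < T := ht.2
  have hmono : AntitoneOn G (Set.Ico t T) := by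
    refine antitoneOn_of_deriv_nonpos (convex_Ico t T) ?_ ?_ ?_
    · intro s hs
      have hs' : s ∈ Set.Ico 0 T := ⟨le_trans ht.1 hs.1, hs.2⟩
      exact (hGderiv s hs').differentiableAt.continuousAt.continuousWithinAt
    · intro s hs
      rw [interior_Ico] at hs
      have hs' : s ∈ Set.Ico 0 T := ⟨le_trans ht.1 hs.1.le, hs.2⟩
      exact (hGderiv s hs').differentiableAt.differentiableWithinAt
    · intro s hs
      rw [interior_Ico] at hs
      have hs' : s ∈ Set.Ico 0 T := ⟨le_trans ht.1 hs.1.le, hs.2⟩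
      rw [(hGderiv s hs').deriv]
      exact hGderiv_le s hs'
  -- limit of G as s → T⁻
  have hTsub : Filter.Tendsto (fun s => T - s) (nhdsWithin T (Set.Iio T))
      (nhdsWithin 0 (Set.Ioi 0)) := by
    apply Filter.Tendsto.inf
    · have : Filter.Tendsto (fun s => T - s) (nhds T) (nhds (T - T)) :=
        (tendsto_const_nhds.sub Filter.tendsto_id)
      simpa using this
    · rw [Filter.tendsto_principal_principal]
      intro s hs
      exact Set.mem_Ioi.mpr (sub_pos.mpr hs)
  have hxlogx : Filter.Tendsto (fun x : ℝ => x * Real.log (4 * π * x))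
      (nhdsWithin 0 (Set.Ioi 0)) (nhds 0) := by
    have h1 : Filter.Tendsto (fun x : ℝ => Real.log x * x ^ (1:ℝ)) (nhdsWithin 0 (Set.Ioi 0))
        (nhds 0) := tendsto_log_mul_rpow_nhdsGT_zero one_pos
    have h2 : Filter.Tendsto (fun x : ℝ => x * Real.log (4*π) + Real.log x * x)
        (nhdsWithin 0 (Set.Ioi 0)) (nhds 0) := by
      have h3 : Filter.Tendsto (fun x : ℝ => x * Real.log (4*π)) (nhdsWithin 0 (Set.Ioi 0))
          (nhds 0) := by
        have : Filter.Tendsto (fun x : ℝ => x * Real.log (4*π)) (nhds 0) (nhds (0 * Real.log (4*π))) :=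
          Filter.tendsto_id.mul_const _
        simpa using this.mono_left nhdsWithin_le_nhds
      have := h3.add (by simpa [Real.rpow_one] using h1)
      simpa using this
    apply h2.congr'
    filter_upwards [self_mem_nhdsWithin] with x hx
    rw [Real.log_mul (by positivity) (ne_of_gt hx)]
    ring
  have hGlim : Filter.Tendsto G (nhdsWithin T (Set.Iio T)) (nhds ((μ₀ + n) * T)) := by
    have l1 : Filter.Tendsto (fun s => (μ₀ + n) * s) (nhdsWithin T (Set.Iio T))
        (nhds ((μ₀ + n) * T)) :=
      ((continuous_const.mul continuous_id).tendsto T).mono_left nhdsWithin_le_nhds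
    have l2 : Filter.Tendsto (fun s => (T - s) * Real.log (4 * π * (T - s)))
        (nhdsWithin T (Set.Iio T)) (nhds 0) := hxlogx.comp hTsub
    have l3 : Filter.Tendsto (fun s => T - s) (nhdsWithin T (Set.Iio T)) (nhds 0) := by
      have : Filter.Tendsto (fun s => T - s) (nhds T) (nhds (T - T)) :=
        tendsto_const_nhds.sub Filter.tendsto_id
      simpa using this.mono_left nhdsWithin_le_nhds
    have := ((hlim.add l1).sub (l2.const_mul c)).add (l3.const_mul c)
    simpa using this
  -- pass to the limit
  have hGt : (μ₀ + n) * T ≤ G t := by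
    refine le_of_tendsto hGlim ?_
    have hmem : Set.Ioo t T ∈ nhdsWithin T (Set.Iio T) :=
      Ioo_mem_nhdsLT_of_mem ⟨htT, le_refl T⟩
    filter_upwards [hmem] with s hs
    exact hmono ⟨le_refl t, htT⟩ ⟨hs.1.le, hs.2⟩ hs.1.le
  -- unfold and conclude
  have hTt : 0 < T - t := sub_pos.mpr htT
  have hlog : μ₀ + c + c * Real.log (4 * π * (T - t)) ≤ Real.log (V t) := by
    simp only [hG] at hGt
    have hn2 : (n : ℝ) = 2 * c := by rw [hc]; ring
    rw [hn2] at hGt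
    have key : (T - t) * (μ₀ + c + c * Real.log (4 * π * (T - t)))
        ≤ (T - t) * Real.log (V t) := by nlinarith [hGt]
    exact (mul_le_mul_iff_right₀ hTt).mp key
  have hVt := hVpos t ht
  calc (4 * π) ^ c * Real.exp (μ₀ + c) * (T - t) ^ c
      = Real.exp (μ₀ + c + c * Real.log (4 * π * (T - t))) := by
        rw [Real.log_mul (by positivity) hTt.ne', Real.rpow_def_of_pos hπ,
          Real.rpow_def_of_pos hTt, ← Real.exp_add, ← Real.exp_add]
        congr 1
        ring
    _ ≤ Real.exp (Real.log (V t)) := Real.exp_le_exp.mpr hlog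
    _ = V t := Real.exp_log hVt
end
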